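/- Let U ⊆ ℝ be open, let b : U → ℝ be three times differentiable with b(r) > 0 for all r ∈ U, and define P(r) := 2/b − (b′)²/b² + (b′)⁴/(4b³) − (b′)²b″/(2b²) + (b″)²/(2b), where primes denote derivatives in r. If at some r₀ ∈ U one has b′(r₀) = 0 and b″(r₀) = 0, then P is differentiable at r₀ with P′(r₀) = 0. -/

import Mathlib

/-- If `b′(r₀) = 0` and `b″(r₀) = 0`, then the quadratic curvature quantity
`P = 2/b − b′²/b² + b′⁴/(4b³) − b′²b″/(2b²) + b″²/(2b)` of the `b`-form metric
has vanishing radial derivative at `r₀` (key step of Proposition 3.1). -/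
theorem rg2_P_deriv_vanishes
    (U : Set ℝ) (hU : IsOpen U) (b : ℝ → ℝ)
    (hb1 : ∀ x ∈ U, DifferentiableAt ℝ b x)
    (hb2 : ∀ x ∈ U, DifferentiableAt ℝ (deriv b) x)
    (hb3 : ∀ x ∈ U, DifferentiableAt ℝ (deriv (deriv b)) x)
    (hbpos : ∀ x ∈ U, 0 < b x)
    (r₀ : ℝ) (hr₀ : r₀ ∈ U)
    (h1 : deriv b r₀ = 0) (h2 : deriv (deriv b) r₀ = 0) :
    HasDerivAt (fun r =>
      2 / b r - (deriv b r) ^ 2 / (b r) ^ 2 + (deriv b r) ^ 4 / (4 * (b r) ^ 3)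
        - (deriv b r) ^ 2 * deriv (deriv b) r / (2 * (b r) ^ 2)
        + (deriv (deriv b) r) ^ 2 / (2 * b r)) 0 r₀ := by
  have hB : b r₀ ≠ 0 := (hbpos r₀ hr₀).ne'
  have hb0 : HasDerivAt b (deriv b r₀) r₀ := (hb1 r₀ hr₀).hasDerivAt
  have hb0' : HasDerivAt (deriv b) (deriv (deriv b) r₀) r₀ := (hb2 r₀ hr₀).hasDerivAt
  have hb0'' : HasDerivAt (deriv (deriv b)) (deriv (deriv (deriv b)) r₀) r₀ :=
    (hb3 r₀ hr₀).hasDerivAt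
  have hB2 : (4:ℝ) * (b r₀) ^ 3 ≠ 0 := by positivity
  have hB3 : (2:ℝ) * (b r₀) ^ 2 ≠ 0 := by positivity
  have hB4 : (2:ℝ) * b r₀ ≠ 0 := by positivity
  have hBp : (b r₀) ^ 2 ≠ 0 := pow_ne_zero _ hB
  have T1 := (hasDerivAt_const r₀ (2:ℝ)).div hb0 hB
  have T2 := (hb0'.pow 2).div (hb0.pow 2) hBp
  have T3 := (hb0'.pow 4).div ((hb0.pow 3).const_mul 4) hB2
  have T4 := ((hb0'.pow 2).mul hb0'').div ((hb0.pow 2).const_mul 2) hB3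
  have T5 := (hb0''.pow 2).div (hb0.const_mul 2) hB4
  have T := (((T1.sub T2).add T3).sub T4).add T5
  convert T using 1
  · rfl
  · rfl
  · rfl
  simp only [Pi.pow_apply, Pi.mul_apply]
  rw [h1, h2]
  ring
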